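/- Let μ be a positive measure on the unit circle (supported on an infinite set) with orthonormal zig-zag (CMV) basis χ and associated CMV matrix 𝒞 satisfying z χ = 𝒞 χ. For any Hermitian Laurent polynomial ℓ, the Gram matrix of the functional uℓ (where u[f] = ∫ f dμ) with respect to χ equals ℓ(𝒞): (uℓ)[χ χ⁺] = ℓ(𝒞). Consequently, uℓ is positive definite if and only if ℓ(𝒞) is positive definite (meaning X ℓ(𝒞) X⁺ > 0 for all finitely supported nonzero row vectors X). -/

import Mathlib

open MeasureTheory

noncomputable section

/-- The space Λ of complex Laurent polynomials. -/
abbrev Lau : Type := AddMonoidAlgebra ℂ ℤ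

/-- The substar operation f_*(z) = conj (f (1/conj z)): coefficientwise
(f_*)_j = conj (f_{-j}). -/
def substar (f : Lau) : Lau :=
  AddMonoidAlgebra.ofCoeff (Finsupp.equivMapDomain (Equiv.neg ℤ)
    (Finsupp.mapRange (fun z => (starRingEnd ℂ) z) (by simp) (AddMonoidAlgebra.coeff f)))

/-- Evaluation of a Laurent polynomial at a point of ℂ. -/
def evalL (f : Lau) (z : ℂ) : ℂ :=
  ∑ m ∈ (AddMonoidAlgebra.coeff (f)).support, (AddMonoidAlgebra.coeff (f)) m * z ^ m

/-- The quadratic form X M X⁺ of an infinite matrix on a finitely supported row vector. -/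
def quadForm (M : ℕ → ℕ → ℂ) (X : ℕ →₀ ℂ) : ℂ :=
  ∑ i ∈ X.support, ∑ j ∈ X.support, X i * M i j * (starRingEnd ℂ) (X j)

/- Auxiliary lemmas -/

lemma Lau_add_apply (f g : Lau) (a : ℤ) :
    (AddMonoidAlgebra.coeff (f + g)) a = (AddMonoidAlgebra.coeff (f)) a + (AddMonoidAlgebra.coeff (g)) a := rfl
lemma Lau_smul_apply (c : ℂ) (f : Lau) (a : ℤ) :
    (AddMonoidAlgebra.coeff (c • f)) a = c * (AddMonoidAlgebra.coeff (f)) a := rfl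
lemma Lau_sub_apply (f g : Lau) (a : ℤ) :
    (AddMonoidAlgebra.coeff (f - g)) a = (AddMonoidAlgebra.coeff (f)) a - (AddMonoidAlgebra.coeff (g)) a := rfl

lemma substar_apply (f : Lau) (a : ℤ) :
    (AddMonoidAlgebra.coeff (substar f)) a = (starRingEnd ℂ) ((AddMonoidAlgebra.coeff (f)) (-a)) := by
  simp [substar, Finsupp.equivMapDomain_apply]

lemma substar_add (f g : Lau) : substar (f + g) = substar f + substar g := by
  ext a
  rw [Lau_add_apply, substar_apply, substar_apply, substar_apply, Lau_add_apply, map_add]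

lemma substar_smul (c : ℂ) (f : Lau) : substar (c • f) = (starRingEnd ℂ) c • substar f := by
  ext a
  rw [substar_apply, Lau_smul_apply, Lau_smul_apply, substar_apply, map_mul]

/-- The zig-zag basis χ spans all of Λ. -/
lemma chi_span (χ : ℕ → Lau)
    (hzigeven : ∀ k : ℕ,
      (AddMonoidAlgebra.coeff (χ (2 * k))).support ⊆ Finset.Icc (-(k : ℤ)) (k : ℤ) ∧
      (0 < ((AddMonoidAlgebra.coeff (χ (2 * k))) (-(k : ℤ))).re ∧
        ((AddMonoidAlgebra.coeff (χ (2 * k))) (-(k : ℤ))).im = 0))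
    (hzigodd : ∀ k : ℕ,
      (AddMonoidAlgebra.coeff (χ (2 * k + 1))).support ⊆ Finset.Icc (-(k : ℤ)) ((k : ℤ) + 1) ∧
      (0 < ((AddMonoidAlgebra.coeff (χ (2 * k + 1))) ((k : ℤ) + 1)).re ∧
        ((AddMonoidAlgebra.coeff (χ (2 * k + 1))) ((k : ℤ) + 1)).im = 0))
    (f : Lau) : f ∈ Submodule.span ℂ (Set.range χ) := by
  have step : ∀ (m : ℕ) (a : ℤ) (S : Finset ℤ),
      (AddMonoidAlgebra.coeff (χ m)).support ⊆ S → (AddMonoidAlgebra.coeff (χ m)) a ≠ 0 →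
      (∀ g : Lau, (AddMonoidAlgebra.coeff (g)).support ⊆ S.erase a →
        g ∈ Submodule.span ℂ (Set.range χ)) →
      ∀ f : Lau, (AddMonoidAlgebra.coeff (f)).support ⊆ S →
        f ∈ Submodule.span ℂ (Set.range χ) := by
    intro m a S hsub hca IH f hf
    set c : ℂ := (AddMonoidAlgebra.coeff (χ m)) a with hc
    set g : Lau := f - ((AddMonoidAlgebra.coeff (f)) a / c) • χ m with hgdef
    have hg : (AddMonoidAlgebra.coeff (g)).support ⊆ S.erase a := by
      intro b hb
      have hb' : (AddMonoidAlgebra.coeff (g)) b ≠ 0 := Finsupp.mem_support_iff.mp hb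
      rw [Finset.mem_erase]
      constructor
      · intro hba
        apply hb'
        rw [hba, hgdef, Lau_sub_apply, Lau_smul_apply, div_mul_cancel₀ _ hca, sub_self]
      · by_cases hfb : (AddMonoidAlgebra.coeff (f)) b ≠ 0
        · exact hf (Finsupp.mem_support_iff.mpr hfb)
        · push_neg at hfb
          apply hsub
          rw [Finsupp.mem_support_iff]
          intro hχb
          apply hb'
          rw [hgdef, Lau_sub_apply, Lau_smul_apply, hχb, hfb, mul_zero, sub_zero]
    have hfg : f = g + ((AddMonoidAlgebra.coeff (f)) a / c) • χ m := by
      rw [hgdef]; abel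
    rw [hfg]
    exact Submodule.add_mem _ (IH g hg)
      (Submodule.smul_mem _ _ (Submodule.subset_span ⟨m, rfl⟩))
  have main : ∀ n : ℕ, ∀ f : Lau,
      (AddMonoidAlgebra.coeff (f)).support ⊆ Finset.Icc (-((n / 2 : ℕ) : ℤ)) (((n + 1) / 2 : ℕ) : ℤ) →
      f ∈ Submodule.span ℂ (Set.range χ) := by
    intro n
    induction n with
    | zero =>
      intro f hf
      have h0 := hzigeven 0
      refine step 0 0 (Finset.Icc 0 0) ?_ ?_ ?_ f ?_
      · simpa using h0.1
      · intro h
        have := h0.2.1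
        simp only [Nat.mul_zero, Nat.cast_zero, neg_zero] at this ⊢
        rw [h] at this; simp at this
      · intro g hg
        have : (AddMonoidAlgebra.coeff (g)).support = ∅ :=
          Finset.subset_empty.mp (by simpa using hg)
        have : g = 0 := AddMonoidAlgebra.coeff_eq_zero.mp (Finsupp.support_eq_empty.mp this)
        rw [this]; exact Submodule.zero_mem _
      · simpa using hf
    | succ n ih =>
      intro f hf
      rcases Nat.even_or_odd (n + 1) with ⟨k, hk⟩ | ⟨k, hk⟩
      · -- n + 1 = 2k
        have hS : Finset.Icc (-(((n+1) / 2 : ℕ) : ℤ)) (((n + 2) / 2 : ℕ) : ℤ)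
            = Finset.Icc (-(k : ℤ)) (k : ℤ) := by congr 1 <;> omega
        refine step (2 * k) (-(k : ℤ)) (Finset.Icc (-(k : ℤ)) (k : ℤ))
          (hzigeven k).1 ?_ ?_ f ?_
        · intro h
          have := (hzigeven k).2.1
          rw [h] at this; simp at this
        · intro g hg
          refine ih g (hg.trans ?_)
          intro b hb
          simp only [Finset.mem_erase, Finset.mem_Icc] at hb ⊢
          omega
        · rw [← hS]; exact hf
      · -- n + 1 = 2k + 1
        have hS : Finset.Icc (-(((n+1) / 2 : ℕ) : ℤ)) (((n + 2) / 2 : ℕ) : ℤ)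
            = Finset.Icc (-(k : ℤ)) ((k : ℤ) + 1) := by congr 1 <;> omega
        refine step (2 * k + 1) ((k : ℤ) + 1) (Finset.Icc (-(k : ℤ)) ((k : ℤ) + 1))
          (hzigodd k).1 ?_ ?_ f ?_
        · intro h
          have := (hzigodd k).2.1
          rw [h] at this; simp at this
        · intro g hg
          refine ih g (hg.trans ?_)
          intro b hb
          simp only [Finset.mem_erase, Finset.mem_Icc] at hb ⊢
          omega
        · rw [← hS]; exact hf
  set N : ℕ := (AddMonoidAlgebra.coeff (f)).support.sup fun a => a.natAbs with hN
  refine main (2 * N) f ?_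
  intro b hb
  have : b.natAbs ≤ N := Finset.le_sup (f := fun a => a.natAbs) hb
  simp only [Finset.mem_Icc]
  omega

/-- For a measure μ on the unit circle with orthonormal zig-zag (CMV) basis χ and
CMV matrix 𝒞 (zχ = 𝒞χ), and any Hermitian Laurent polynomial ℓ, the Gram matrix of
the functional uℓ with respect to χ equals ℓ(𝒞) (the matrix L with ℓχ = Lχ);
consequently uℓ is positive definite iff ℓ(𝒞) is positive definite. -/
theorem stmt13
    (μ : Measure ℂ) [IsFiniteMeasure μ]
    (hcirc : μ {z : ℂ | ‖z‖ ≠ 1} = 0)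
    (hinf : ∀ s : Finset ℂ, μ ((↑s : Set ℂ)ᶜ) ≠ 0)
    (u : Lau →ₗ[ℂ] ℂ)
    (hu : ∀ f : Lau, u f = ∫ z, evalL f z ∂μ)
    (χ : ℕ → Lau)
    (hzigeven : ∀ k : ℕ,
      (AddMonoidAlgebra.coeff (χ (2 * k))).support ⊆ Finset.Icc (-(k : ℤ)) (k : ℤ) ∧
      (0 < ((AddMonoidAlgebra.coeff (χ (2 * k))) (-(k : ℤ))).re ∧
        ((AddMonoidAlgebra.coeff (χ (2 * k))) (-(k : ℤ))).im = 0))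
    (hzigodd : ∀ k : ℕ,
      (AddMonoidAlgebra.coeff (χ (2 * k + 1))).support ⊆ Finset.Icc (-(k : ℤ)) ((k : ℤ) + 1) ∧
      (0 < ((AddMonoidAlgebra.coeff (χ (2 * k + 1))) ((k : ℤ) + 1)).re ∧
        ((AddMonoidAlgebra.coeff (χ (2 * k + 1))) ((k : ℤ) + 1)).im = 0))
    (horth : ∀ i j : ℕ, u (χ i * substar (χ j)) = if i = j then 1 else 0)
    (Cm : ℕ → ℕ → ℂ)
    (hCfin : ∀ i : ℕ, (Function.support (Cm i)).Finite)
    (hC : ∀ i : ℕ, (AddMonoidAlgebra.ofCoeff (Finsupp.single (1 : ℤ) (1 : ℂ)) : Lau) * χ i = ∑ᶠ j, Cm i j • χ j)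
    (ℓ : Lau) (hherm : substar ℓ = ℓ)
    (L : ℕ → ℕ → ℂ)
    (hLfin : ∀ i : ℕ, (Function.support (L i)).Finite)
    (hL : ∀ i : ℕ, ℓ * χ i = ∑ᶠ j, L i j • χ j) :
    (∀ i j : ℕ, u (ℓ * (χ i * substar (χ j))) = L i j) ∧
    ((∀ f : Lau, f ≠ 0 →
        0 < (u (ℓ * (f * substar f))).re ∧ (u (ℓ * (f * substar f))).im = 0) ↔
      (∀ X : ℕ →₀ ℂ, X ≠ 0 →
        0 < (quadForm L X).re ∧ (quadForm L X).im = 0)) := by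
  have hL' : ∀ i : ℕ, ℓ * χ i = ∑ k ∈ (hLfin i).toFinset, L i k • χ k := by
    intro i
    rw [hL i]
    refine finsum_eq_finset_sum_of_support_subset _ ?_
    intro k hk
    simp only [Function.mem_support] at hk
    rw [Set.Finite.coe_toFinset, Function.mem_support]
    intro h0; exact hk (by rw [h0, zero_smul])
  have key : ∀ i j : ℕ, u (ℓ * (χ i * substar (χ j))) = L i j := by
    intro i j
    rw [← mul_assoc, hL' i, Finset.sum_mul, map_sum]
    simp only [smul_mul_assoc, _root_.map_smul, horth, smul_eq_mul, mul_ite, mul_one, mul_zero]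
    rw [Finset.sum_ite_eq' ((hLfin i).toFinset) j (L i)]
    split_ifs with h
    · rfl
    · rw [Set.Finite.mem_toFinset, Function.mem_support, not_not] at h
      exact h.symm
  have hss : ∀ (s : Finset ℕ) (c : ℕ → ℂ),
      substar (∑ i ∈ s, c i • χ i) = ∑ i ∈ s, (starRingEnd ℂ) (c i) • substar (χ i) := by
    intro s c
    rw [show substar (∑ i ∈ s, c i • χ i) = ∑ i ∈ s, substar (c i • χ i) from
      map_sum (AddMonoidHom.mk' substar substar_add) _ s]
    exact Finset.sum_congr rfl fun i _ => substar_smul (c i) (χ i)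
  have coeffL : ∀ (X : ℕ →₀ ℂ) (j : ℕ),
      u ((X.sum fun i a => a • χ i) * substar (χ j)) = X j := by
    intro X j
    rw [Finsupp.sum, Finset.sum_mul, map_sum]
    simp only [smul_mul_assoc, _root_.map_smul, horth, smul_eq_mul, mul_ite, mul_one, mul_zero]
    rw [Finset.sum_ite_eq' X.support j X]
    split_ifs with h
    · rfl
    · exact (Finsupp.notMem_support_iff.mp h).symm
  have expand : ∀ X : ℕ →₀ ℂ,
      u (ℓ * ((X.sum fun i a => a • χ i) * substar (X.sum fun i a => a • χ i)))
        = quadForm L X := by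
    intro X
    rw [Finsupp.sum, hss X.support X, Finset.sum_mul_sum]
    simp only [Finset.mul_sum, map_sum, smul_mul_assoc, mul_smul_comm, _root_.map_smul,
      smul_eq_mul, key]
    unfold quadForm
    refine Finset.sum_congr rfl fun i _ => Finset.sum_congr rfl fun j _ => by ring
  refine ⟨key, ?_, ?_⟩
  · intro hpos X hX
    have hf : (X.sum fun i a => a • χ i) ≠ 0 := by
      intro h0
      obtain ⟨j, hj⟩ := Finsupp.support_nonempty_iff.mpr hX
      have hc := coeffL X j
      rw [h0, zero_mul, map_zero] at hc
      exact Finsupp.mem_support_iff.mp hj hc.symm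
    have := hpos _ hf
    rwa [expand X] at this
  · intro hQ f hf
    obtain ⟨X, hX⟩ := Finsupp.mem_span_range_iff_exists_finsupp.mp
      (chi_span χ hzigeven hzigodd f)
    have hXne : X ≠ 0 := by
      rintro rfl
      rw [Finsupp.sum_zero_index] at hX
      exact hf hX.symm
    have := hQ X hXne
    rw [← hX, expand X]
    exact this
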